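/- The exponential rate c_1 = 1 in the subexponential tail estimate is optimal: for every c_1 > 1, every c_2 > 0, and every atomless probability space (X, Σ, P), there exist λ > 0, a filtration {F_n}_{n≥0} with F_0 trivial, and a simple martingale φ adapted to it such that Sφ ≤ 1 almost surely and P(φ_∞ − φ_0 ≥ λ) > c_2·e^{−c_1·λ}. -/

import Mathlib

open MeasureTheory Filter
open scoped ENNReal

section aux
variable {X : Type*} {m : MeasurableSpace X} {μ : Measure X} [IsProbabilityMeasure μ]


lemma aux_half
    (hatomless : ∀ s : Set X, MeasurableSet s → 0 < μ s →
      ∃ t : Set X, t ⊆ s ∧ MeasurableSet t ∧ 0 < μ t ∧ μ t < μ s)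
    (s : Set X) (hs : MeasurableSet s) (hpos : 0 < μ s) :
    ∃ t, t ⊆ s ∧ MeasurableSet t ∧ 0 < μ t ∧ μ t ≤ μ s / 2 := by
  obtain ⟨u, hus, hu, hu0, hult⟩ := hatomless s hs hpos
  by_cases h : μ u ≤ μ s / 2
  · exact ⟨u, hus, hu, hu0, h⟩
  · push_neg at h
    refine ⟨s \ u, Set.diff_subset, hs.diff hu, ?_, ?_⟩
    · rw [measure_diff hus hu.nullMeasurableSet (measure_ne_top μ u)]
      exact tsub_pos_iff_lt.2 hult
    · rw [measure_diff hus hu.nullMeasurableSet (measure_ne_top μ u)]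
      rw [tsub_le_iff_right]
      calc μ s = μ s / 2 + μ s / 2 := (ENNReal.add_halves _).symm
      _ ≤ μ s / 2 + μ u := add_le_add (le_refl _) h.le

lemma aux_small
    (hatomless : ∀ s : Set X, MeasurableSet s → 0 < μ s →
      ∃ t : Set X, t ⊆ s ∧ MeasurableSet t ∧ 0 < μ t ∧ μ t < μ s)
    (s : Set X) (hs : MeasurableSet s) (hpos : 0 < μ s) (ε : ℝ≥0∞) (hε : 0 < ε) :
    ∃ t, t ⊆ s ∧ MeasurableSet t ∧ 0 < μ t ∧ μ t ≤ ε := by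
  have key : ∀ n : ℕ, ∃ t, t ⊆ s ∧ MeasurableSet t ∧ 0 < μ t ∧ μ t ≤ μ s * 2⁻¹ ^ n := by
    intro n
    induction n with
    | zero => exact ⟨s, subset_rfl, hs, hpos, by simp⟩
    | succ n ih =>
      obtain ⟨t, hts, ht, ht0, htle⟩ := ih
      obtain ⟨u, hut, hu, hu0, hule⟩ := aux_half hatomless t ht ht0
      refine ⟨u, hut.trans hts, hu, hu0, hule.trans ?_⟩
      rw [pow_succ, div_eq_mul_inv, ← mul_assoc]
      gcongr
  obtain ⟨n, hn⟩ := ENNReal.exists_inv_two_pow_lt hε.ne'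
  obtain ⟨t, hts, ht, ht0, htle⟩ := key n
  refine ⟨t, hts, ht, ht0, htle.trans ?_⟩
  calc μ s * 2⁻¹ ^ n ≤ 1 * 2⁻¹ ^ n := by gcongr; exact prob_le_one
  _ = 2⁻¹ ^ n := one_mul _
  _ ≤ ε := hn.le


lemma aux_interval
    (hatomless : ∀ s : Set X, MeasurableSet s → 0 < μ s →
      ∃ t : Set X, t ⊆ s ∧ MeasurableSet t ∧ 0 < μ t ∧ μ t < μ s)
    (s : Set X) (hs : MeasurableSet s) (a b : ℝ≥0∞) (ha : 0 < a) (hab : a < b)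
    (hbs : b ≤ μ s) :
    ∃ t, t ⊆ s ∧ MeasurableSet t ∧ a ≤ μ t ∧ μ t ≤ b := by
  have hbtop : b ≠ ⊤ := ne_top_of_le_ne_top (measure_ne_top μ s) hbs
  have hatop : a ≠ ⊤ := ne_top_of_lt (hab.trans_le hbs)
  have hspos : 0 < μ s := ha.trans (hab.trans_le hbs)
  -- the near-maximal piece step
  have step : ∀ u : Set X, u ⊆ s → MeasurableSet u → μ u < a →
      ∃ t, t ⊆ s \ u ∧ MeasurableSet t ∧ 0 < μ t ∧ μ t ≤ b - μ u ∧
        ∀ t', t' ⊆ s \ u → MeasurableSet t' → μ t' ≤ b - μ u → μ t' ≤ 2 * μ t := by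
    intro u hus hu hua
    have hub : μ u < b := hua.trans hab
    have hdiffpos : 0 < μ (s \ u) := by
      rw [measure_diff hus hu.nullMeasurableSet (measure_ne_top μ u)]
      exact tsub_pos_iff_lt.2 (hub.trans_le hbs)
    have hεpos : 0 < b - μ u := tsub_pos_iff_lt.2 hub
    set σ : ℝ≥0∞ := ⨆ (t : Set X) (_ : t ⊆ s \ u ∧ MeasurableSet t ∧ μ t ≤ b - μ u), μ t
      with hσdef
    obtain ⟨t₀, ht₀s, ht₀m, ht₀pos, ht₀le⟩ :=
      aux_small hatomless (s \ u) (hs.diff hu) hdiffpos (b - μ u) hεpos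
    have hσpos : 0 < σ :=
      lt_of_lt_of_le ht₀pos (le_iSup_of_le t₀ (le_iSup_of_le ⟨ht₀s, ht₀m, ht₀le⟩ le_rfl))
    have hσle : σ ≤ b - μ u := iSup_le fun t => iSup_le fun ht => ht.2.2
    have hσtop : σ ≠ ⊤ := (hσle.trans_lt (lt_of_le_of_lt tsub_le_self hbtop.lt_top)).ne
    have hhalf : σ / 2 < σ := ENNReal.half_lt_self hσpos.ne' hσtop
    rw [hσdef] at hhalf
    rw [lt_iSup_iff] at hhalf
    obtain ⟨t, ht⟩ := hhalf
    rw [lt_iSup_iff] at ht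
    obtain ⟨⟨hts, htm, htle⟩, htgt⟩ := ht
    refine ⟨t, hts, htm, lt_of_le_of_lt zero_le htgt, htle, ?_⟩
    intro t' ht's ht'm ht'le
    have h1 : μ t' ≤ σ := le_iSup_of_le t' (le_iSup_of_le ⟨ht's, ht'm, ht'le⟩ le_rfl)
    calc μ t' ≤ σ := h1
    _ = 2 * (σ / 2) := (ENNReal.mul_div_cancel two_ne_zero ENNReal.ofNat_ne_top).symm
    _ ≤ 2 * μ t := mul_le_mul_right htgt.le 2
  choose! F hF1 hF2 hF3 hF4 hF5 using step
  set g : Set X → Set X := fun u => if μ u < a then u ∪ F u else u with hgdef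
  set U : ℕ → Set X := fun n => g^[n] ∅ with hUdef
  have hUsucc : ∀ n, U (n + 1) = g (U n) := fun n => Function.iterate_succ_apply' g n ∅
  have inv : ∀ n, U n ⊆ s ∧ MeasurableSet (U n) ∧ μ (U n) ≤ b := by
    intro n
    induction n with
    | zero => exact ⟨Set.empty_subset s, MeasurableSet.empty, by simp [hUdef]⟩
    | succ n ih =>
      obtain ⟨ih1, ih2, ih3⟩ := ih
      rw [hUsucc n]
      by_cases h : μ (U n) < a
      · simp only [hgdef, if_pos h]
        refine ⟨Set.union_subset ih1 ((hF1 _ ih1 ih2 h).trans Set.diff_subset),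
          ih2.union (hF2 _ ih1 ih2 h), ?_⟩
        calc μ (U n ∪ F (U n)) ≤ μ (U n) + μ (F (U n)) := measure_union_le _ _
        _ ≤ μ (U n) + (b - μ (U n)) := by gcongr; exact hF4 _ ih1 ih2 h
        _ = b := add_tsub_cancel_of_le ih3
      · simpa [hgdef, if_neg h] using ⟨ih1, ih2, ih3⟩
  have main : ∃ n, a ≤ μ (U n) := by
    by_contra hcon
    push_neg at hcon
    have hmono : Monotone U := by
      apply monotone_nat_of_le_succ
      intro n
      rw [hUsucc n]
      by_cases h : μ (U n) < a
      · simp only [hgdef, if_pos h]; exact Set.subset_union_left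
      · simp [hgdef, if_neg h]
    set W : Set X := ⋃ n, U n with hWdef
    have hWs : W ⊆ s := Set.iUnion_subset fun n => (inv n).1
    have hWm : MeasurableSet W := MeasurableSet.iUnion fun n => (inv n).2.1
    have hWle : μ W ≤ a := by
      rw [hWdef, (Monotone.directed_le hmono).measure_iUnion]
      exact iSup_le fun n => (hcon n).le
    have hdiffpos : 0 < μ (s \ W) := by
      rw [measure_diff hWs hWm.nullMeasurableSet (measure_ne_top μ W)]
      exact tsub_pos_iff_lt.2 (lt_of_le_of_lt hWle (hab.trans_le hbs))
    obtain ⟨t', ht's, ht'm, ht'pos, ht'le⟩ :=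
      aux_small hatomless (s \ W) (hs.diff hWm) hdiffpos (b - a) (tsub_pos_iff_lt.2 hab)
    have growth : ∀ n : ℕ, μ t' / 2 * n ≤ μ (U n) := by
      intro n
      induction n with
      | zero => simp
      | succ n ih =>
        have hlt := hcon n
        have hsub : t' ⊆ s \ U n := ht's.trans (Set.diff_subset_diff_right (Set.subset_iUnion U n))
        have hle' : μ t' ≤ b - μ (U n) :=
          ht'le.trans (tsub_le_tsub_left hlt.le b)
        have hkey : μ t' ≤ 2 * μ (F (U n)) :=
          hF5 _ (inv n).1 (inv n).2.1 hlt t' hsub ht'm hle'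
        have hhalfle : μ t' / 2 ≤ μ (F (U n)) := by
          rw [ENNReal.div_le_iff two_ne_zero ENNReal.ofNat_ne_top]
          rw [mul_comm] at hkey
          exact hkey
        have hdisj : Disjoint (U n) (F (U n)) :=
          Disjoint.mono_right (hF1 _ (inv n).1 (inv n).2.1 hlt) Set.disjoint_sdiff_right
        have hμadd : μ (U (n + 1)) = μ (U n) + μ (F (U n)) := by
          rw [hUsucc n]
          simp only [hgdef, if_pos hlt]
          exact measure_union hdisj (hF2 _ (inv n).1 (inv n).2.1 hlt)
        calc μ t' / 2 * (↑(n + 1)) = μ t' / 2 * n + μ t' / 2 := by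
              push_cast; ring
        _ ≤ μ (U n) + μ (F (U n)) := add_le_add ih hhalfle
        _ = μ (U (n + 1)) := hμadd.symm
    have hc0 : μ t' / 2 ≠ 0 := by
      simp only [ne_eq, ENNReal.div_eq_zero_iff]
      push_neg
      exact ⟨ht'pos.ne', ENNReal.ofNat_ne_top⟩
    have htoplt : a / (μ t' / 2) ≠ ⊤ := (ENNReal.div_lt_top hatop hc0).ne
    obtain ⟨n, hn⟩ := ENNReal.exists_nat_gt htoplt
    have : a < μ t' / 2 * n := by
      rw [ENNReal.div_lt_iff (Or.inl hc0) (Or.inl ((ENNReal.div_lt_top (measure_ne_top μ t') two_ne_zero).ne))] at hn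
      rw [mul_comm]
      exact hn
    exact absurd ((growth n).trans_lt (hcon n)) (not_lt.mpr this.le)
  obtain ⟨n, hn⟩ := main
  exact ⟨U n, (inv n).1, (inv n).2.1, hn, (inv n).2.2⟩


lemma aux_chain
    (hatomless : ∀ s : Set X, MeasurableSet s → 0 < μ s →
      ∃ t : Set X, t ⊆ s ∧ MeasurableSet t ∧ 0 < μ t ∧ μ t < μ s)
    (r q : ℝ) (hr : 0 < r) (hrq : r < q) (hq1 : q ≤ 1) :
    ∃ A : ℕ → Set X, A 0 = Set.univ ∧ (∀ k, MeasurableSet (A k)) ∧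
      (∀ k, A (k + 1) ⊆ A k) ∧ (∀ k, 0 < μ (A k)) ∧
      (∀ k, ENNReal.ofReal r * μ (A k) ≤ μ (A (k + 1))) ∧
      (∀ k, μ (A (k + 1)) ≤ ENNReal.ofReal q * μ (A k)) := by
  have hq0 : 0 < q := hr.trans hrq
  have step : ∀ s : Set X, MeasurableSet s → 0 < μ s →
      ∃ t, t ⊆ s ∧ MeasurableSet t ∧ ENNReal.ofReal r * μ s ≤ μ t ∧
        μ t ≤ ENNReal.ofReal q * μ s := by
    intro s hs hpos
    have hsne : μ s ≠ 0 := hpos.ne'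
    have hstop : μ s ≠ ⊤ := measure_ne_top μ s
    have ha : 0 < ENNReal.ofReal r * μ s :=
      ENNReal.mul_pos (by simpa using hr) hsne
    have hab : ENNReal.ofReal r * μ s < ENNReal.ofReal q * μ s := by
      refine ENNReal.mul_lt_mul_left hsne hstop ?_
      exact ENNReal.ofReal_lt_ofReal_iff hq0 |>.2 hrq
    have hbs : ENNReal.ofReal q * μ s ≤ μ s := by
      calc ENNReal.ofReal q * μ s ≤ 1 * μ s := by
            gcongr
            exact ENNReal.ofReal_le_one.2 hq1
      _ = μ s := one_mul _
    exact aux_interval hatomless s hs _ _ ha hab hbs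
  classical
  let T : {p : Set X // MeasurableSet p ∧ 0 < μ p} → {p : Set X // MeasurableSet p ∧ 0 < μ p} :=
    fun p => ⟨(step p.1 p.2.1 p.2.2).choose,
      (step p.1 p.2.1 p.2.2).choose_spec.2.1,
      lt_of_lt_of_le (ENNReal.mul_pos (by simpa using hr) p.2.2.ne')
        (step p.1 p.2.1 p.2.2).choose_spec.2.2.1⟩
  let B : ℕ → {p : Set X // MeasurableSet p ∧ 0 < μ p} :=
    fun n => Nat.rec ⟨Set.univ, MeasurableSet.univ, by simp⟩ (fun _ p => T p) n
  have hB : ∀ n, B (n + 1) = T (B n) := fun n => rfl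
  refine ⟨fun n => (B n).1, rfl, fun k => (B k).2.1, fun k => ?_, fun k => (B k).2.2,
    fun k => ?_, fun k => ?_⟩
  · simp only []; exact (step (B k).1 (B k).2.1 (B k).2.2).choose_spec.1
  · simp only []; exact (step (B k).1 (B k).2.1 (B k).2.2).choose_spec.2.2.1
  · simp only []; exact (step (B k).1 (B k).2.1 (B k).2.2).choose_spec.2.2.2

lemma aux_atom (A : ℕ → Set X) (hanti : ∀ k, A (k + 1) ⊆ A k) (n : ℕ) (s : Set X)
    (hs : MeasurableSet[MeasurableSpace.generateFrom {t | ∃ k ≤ n, t = A k}] s) :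
    A n ⊆ s ∨ s ∩ A n = ∅ := by
  have hmono : ∀ k l : ℕ, k ≤ l → A l ⊆ A k := by
    intro k l hkl
    induction l with
    | zero => rw [Nat.le_zero.1 hkl]
    | succ l ih =>
      rcases Nat.lt_or_ge k (l + 1) with h | h
      · exact (hanti l).trans (ih (Nat.lt_succ_iff.1 h))
      · rw [Nat.le_antisymm hkl h]
  induction s, hs using MeasurableSpace.generateFrom_induction with
  | hC t ht _ =>
    obtain ⟨k, hk, rfl⟩ := ht
    exact Or.inl (hmono k n hk)
  | empty => exact Or.inr (Set.empty_inter _)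
  | compl t _ ih =>
    rcases ih with h | h
    · exact Or.inr (by rw [Set.eq_empty_iff_forall_notMem]; intro x ⟨hxc, hxA⟩; exact hxc (h hxA))
    · refine Or.inl fun x hx => ?_
      intro hxt
      exact (Set.eq_empty_iff_forall_notMem.1 h x) ⟨hxt, hx⟩
  | iUnion f _ ih =>
    by_cases h : ∃ i, A n ⊆ f i
    · obtain ⟨i, hi⟩ := h
      exact Or.inl (hi.trans (Set.subset_iUnion f i))
    · push_neg at h
      refine Or.inr ?_
      rw [Set.iUnion_inter, Set.iUnion_eq_empty]
      intro i
      rcases ih i with hi | hi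
      · exact absurd hi (h i)
      · exact hi

end aux

set_option maxHeartbeats 2000000 in
/-- The exponential rate `c₁ = 1` in the subexponential tail estimate
is optimal: for every `c₁ > 1`, `c₂ > 0`, and every atomless probability space there
exist `λ > 0` and a simple martingale with `Sφ ≤ 1` a.s. such that
`P(φ_∞ − φ_0 ≥ λ) > c₂·e^{−c₁·λ}`. -/
theorem tail_estimate_rate_optimal
    {X : Type*} {m : MeasurableSpace X} {μ : Measure X} [IsProbabilityMeasure μ]
    (hatomless : ∀ s : Set X, MeasurableSet s → 0 < μ s →
      ∃ t : Set X, t ⊆ s ∧ MeasurableSet t ∧ 0 < μ t ∧ μ t < μ s)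
    (c₁ c₂ : ℝ) (hc₁ : 1 < c₁) (hc₂ : 0 < c₂) :
    ∃ (lam : ℝ) (ℱ : Filtration ℕ m) (φ : ℕ → X → ℝ) (N : ℕ),
      0 < lam ∧ ℱ 0 = ⊥ ∧ Martingale φ ℱ μ ∧ (∀ n, N ≤ n → φ n = φ N) ∧
      (∀ᵐ ω ∂μ, Real.sqrt (∑' n, (φ (n + 1) ω - φ n ω) ^ 2) ≤ 1) ∧
      ENNReal.ofReal (c₂ * Real.exp (-(c₁ * lam))) < μ {ω | lam ≤ φ N ω - φ 0 ω} := by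
  classical
  ------------------------------------------------------------------ parameters
  have hc₁0 : (0:ℝ) < c₁ := lt_trans one_pos hc₁
  set δ : ℝ := (1 + 1/c₁)/2 with hδdef
  have hinvc₁ : 1/c₁ < 1 := by rw [div_lt_one hc₁0]; exact hc₁
  have hinvc₁0 : 0 < 1/c₁ := by positivity
  have hδ0 : 0 < δ := by rw [hδdef]; linarith
  have hδ1 : δ < 1 := by rw [hδdef]; linarith
  have hδgt : 1/c₁ < δ := by rw [hδdef]; linarith
  have hδinvlt : 1/δ < c₁ := by
    rw [div_lt_iff₀ hδ0]
    rw [div_lt_iff₀ hc₁0] at hδgt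
    linarith
  set γ : ℝ := (c₁ - 1/δ)/2 with hγdef
  have hγ0 : 0 < γ := by rw [hγdef]; linarith
  set lam : ℝ := max 1 ((Real.log c₂ + 1)/γ) with hlamdef
  have hlam1 : (1:ℝ) ≤ lam := le_max_left _ _
  have hlam0 : 0 < lam := lt_of_lt_of_le one_pos hlam1
  have hlamγ : Real.log c₂ + 1 ≤ lam * γ := by
    have h := le_max_right 1 ((Real.log c₂ + 1)/γ)
    rw [div_le_iff₀ hγ0] at h
    rw [hlamdef]
    exact h
  have hδsq : 0 < 1 - δ^2 := by nlinarith
  obtain ⟨N, hN1, hceil⟩ : ∃ N : ℕ, 1 ≤ N ∧ max (lam/γ) (lam^2/(1-δ^2)) ≤ (N:ℝ) := by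
    obtain ⟨n, hn⟩ := exists_nat_ge (max (lam/γ) (lam^2/(1-δ^2)))
    exact ⟨max 1 n, le_max_left _ _,
      hn.trans (by exact_mod_cast le_max_right 1 n)⟩
  have hN0 : (0:ℝ) < N := by exact_mod_cast hN1
  have hNγ : lam/γ ≤ N := le_trans (le_max_left _ _) hceil
  have hNsq : lam^2/(1-δ^2) ≤ N := le_trans (le_max_right _ _) hceil
  set d : ℝ := lam / N with hddef
  have hd0 : 0 < d := by rw [hddef]; positivity
  have hNd : (N:ℝ) * d = lam := by
    rw [hddef, mul_div_cancel₀ _ hN0.ne']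
  have hdγ : d ≤ γ := by
    rw [hddef, div_le_iff₀ hN0]
    rw [div_le_iff₀ hγ0] at hNγ
    linarith
  have hld : lam * d ≤ 1 - δ^2 := by
    have h1 : lam * d = lam^2/N := by rw [hddef]; ring
    rw [h1, div_le_iff₀ hN0]
    rw [div_le_iff₀ hδsq] at hNsq
    linarith
  set q : ℝ := δ/(d + δ) with hqdef
  have hq0 : 0 < q := by rw [hqdef]; positivity
  have hq1 : q < 1 := by
    rw [hqdef, div_lt_one (by linarith)]
    linarith
  set r : ℝ := q * Real.exp (-(d^2)) with hrdef
  have hr0 : 0 < r := by rw [hrdef]; positivity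
  have hrq : r < q := by
    rw [hrdef]
    have : Real.exp (-(d^2)) < 1 := Real.exp_lt_one_iff.2 (by nlinarith)
    nlinarith
  clear_value δ γ lam d q r
  ------------------------------------------------------------------ the chain
  obtain ⟨A, hA0, hAm, hAsub, hApos, hAlb, hAub⟩ := aux_chain hatomless r q hr0 hrq hq1.le
  have hAmono : ∀ k l : ℕ, k ≤ l → A l ⊆ A k := by
    intro k l hkl
    induction l with
    | zero => rw [Nat.le_zero.1 hkl]
    | succ l ih =>
      rcases Nat.lt_or_ge k (l + 1) with h | h
      · exact (hAsub l).trans (ih (Nat.lt_succ_iff.1 h))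
      · rw [Nat.le_antisymm hkl h]
  set p : ℕ → ℝ := fun k => (μ (A k)).toReal with hpdef
  have hppos : ∀ k, 0 < p k := fun k => ENNReal.toReal_pos (hApos k).ne' (measure_ne_top μ _)
  have hpub : ∀ k, p (k+1) ≤ q * p k := by
    intro k
    have h2 : (ENNReal.ofReal q * μ (A k)).toReal = q * p k := by
      rw [ENNReal.toReal_mul, ENNReal.toReal_ofReal hq0.le]
    rw [hpdef, ← h2]
    exact ENNReal.toReal_mono
      (ENNReal.mul_ne_top ENNReal.ofReal_ne_top (measure_ne_top μ _)) (hAub k)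
  have hplb : ∀ k, r * p k ≤ p (k+1) := by
    intro k
    have h2 : (ENNReal.ofReal r * μ (A k)).toReal = r * p k := by
      rw [ENNReal.toReal_mul, ENNReal.toReal_ofReal hr0.le]
    rw [hpdef, ← h2]
    exact ENNReal.toReal_mono (measure_ne_top μ _) (hAlb k)
  have hpdec : ∀ k, p (k+1) < p k := by
    intro k
    exact (hpub k).trans_lt (mul_lt_of_lt_one_left (hppos k) hq1)
  set ds : ℕ → ℝ := fun k => d * p (k+1) / (p k - p (k+1)) with hdsdef
  have hds0 : ∀ k, 0 < ds k := by
    intro k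
    have := hpdec k
    have := hppos (k+1)
    rw [hdsdef]
    have hsp : 0 < p k - p (k+1) := by linarith
    positivity
  have hdsle : ∀ k, ds k ≤ δ := by
    intro k
    have hden : 0 < p k - p (k+1) := by linarith [hpdec k]
    rw [hdsdef]
    simp only []
    rw [div_le_iff₀ hden]
    have hq' : (d + δ) * q = δ := by
      rw [hqdef]
      field_simp
    have h1 := hpub k
    have h2 : (d + δ) * p (k+1) ≤ (d + δ) * (q * p k) :=
      mul_le_mul_of_nonneg_left h1 (by linarith)
    have h3 : (d + δ) * (q * p k) = δ * p k := by rw [← mul_assoc, hq']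
    nlinarith
  have hmartid : ∀ k, (d + ds k) * p (k+1) = ds k * p k := by
    intro k
    have hden : p k - p (k+1) ≠ 0 := by linarith [hpdec k]
    rw [hdsdef]
    field_simp
    ring
  ------------------------------------------------------------------ filtration
  set Fn : ℕ → MeasurableSpace X :=
    fun n => MeasurableSpace.generateFrom {t | ∃ k ≤ n, t = A k} with hFndef
  have hFnmono : Monotone Fn := by
    intro i j hij
    refine MeasurableSpace.generateFrom_mono ?_
    rintro t ⟨k, hk, rfl⟩
    exact ⟨k, hk.trans hij, rfl⟩
  have hFnle : ∀ n, Fn n ≤ m := by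
    intro n
    refine MeasurableSpace.generateFrom_le ?_
    rintro t ⟨k, _, rfl⟩
    exact hAm k
  set ℱ : Filtration ℕ m := ⟨Fn, hFnmono, hFnle⟩ with hℱdef
  have hAmeasF : ∀ n k, k ≤ n → MeasurableSet[Fn n] (A k) :=
    fun n k hk => MeasurableSpace.measurableSet_generateFrom ⟨k, hk, rfl⟩
  ------------------------------------------------------------------ the martingale
  set φ : ℕ → X → ℝ := fun n ω => ∑ k ∈ Finset.range (min n N),
      ((A (k+1)).indicator (fun _ => d + ds k) ω - (A k).indicator (fun _ => ds k) ω)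
    with hφdef
  have hadapted : ∀ n, StronglyMeasurable[Fn n] (φ n) := by
    intro n
    apply Measurable.stronglyMeasurable
    apply Finset.measurable_sum
    intro k hk
    have hk' : k < min n N := Finset.mem_range.1 hk
    exact ((measurable_const.indicator (hAmeasF n (k+1) (by omega))).sub
      (measurable_const.indicator (hAmeasF n k (by omega))))
  have hint : ∀ n, Integrable (φ n) μ := by
    intro n
    apply integrable_finset_sum
    intro k _
    exact ((integrable_const (d + ds k)).indicator (hAm (k+1))).sub
      ((integrable_const (ds k)).indicator (hAm k))
  have hsimple : ∀ n, N ≤ n → φ n = φ N := by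
    intro n hn
    funext ω
    simp only [hφdef]
    rw [min_eq_right hn, min_self]
  -- value lemmas
  have hφ0 : ∀ ω, φ 0 ω = 0 := by intro ω; simp [hφdef]
  ------------------------------------------------------------------ martingale property
  have hmart : Martingale φ ℱ μ := by
    constructor
    · exact fun n => hadapted n
    · intro i j hij
      have hminle : min i N ≤ min j N := min_le_min hij le_rfl
      refine ((ae_eq_condExp_of_forall_setIntegral_eq (ℱ.le i) (hint j)
        (fun s _ _ => (hint i).integrableOn) (fun s hs hμs => ?_)
        ((hadapted i).aestronglyMeasurable)).symm)
      -- goal: ∫ x in s, φ i x ∂μ = ∫ x in s, φ j x ∂μ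
      have hterm_int : ∀ k, Integrable (fun ω =>
          (A (k+1)).indicator (fun _ => d + ds k) ω - (A k).indicator (fun _ => ds k) ω) μ :=
        fun k => ((integrable_const (d + ds k)).indicator (hAm (k+1))).sub
          ((integrable_const (ds k)).indicator (hAm k))
      have hsplit : ∀ ω, φ j ω = φ i ω + ∑ k ∈ Finset.Ico (min i N) (min j N),
          ((A (k+1)).indicator (fun _ => d + ds k) ω - (A k).indicator (fun _ => ds k) ω) := by
        intro ω
        simp only [hφdef]
        rw [← Finset.sum_range_add_sum_Ico _ hminle]
      have hzero : ∀ k ∈ Finset.Ico (min i N) (min j N),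
          ∫ x in s, ((A (k+1)).indicator (fun _ => d + ds k) x
            - (A k).indicator (fun _ => ds k) x) ∂μ = 0 := by
        intro k hk
        rw [Finset.mem_Ico] at hk
        have hik : i ≤ k := by omega
        have hkN : k < N := by omega
        have hsmem : MeasurableSet[Fn k] s := (hFnmono hik) s hs
        have hIa : IntegrableOn ((A (k+1)).indicator (fun _ => d + ds k)) s μ :=
          (((integrable_const (d + ds k)).indicator (hAm (k+1)))).integrableOn
        have hIb : IntegrableOn ((A k).indicator (fun _ => ds k)) s μ :=
          (((integrable_const (ds k)).indicator (hAm k))).integrableOn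
        rw [integral_sub hIa hIb, setIntegral_indicator (hAm (k+1)),
          setIntegral_indicator (hAm k)]
        rcases aux_atom A hAsub k s hsmem with hsub | hdisj
        · have e1 : s ∩ A (k+1) = A (k+1) :=
            Set.inter_eq_self_of_subset_right ((hAsub k).trans hsub)
          have e2 : s ∩ A k = A k := Set.inter_eq_self_of_subset_right hsub
          rw [e1, e2, setIntegral_const, setIntegral_const]
          simp only [smul_eq_mul]
          have hid := hmartid k
          rw [hpdef] at hid
          simp only [] at hid
          simp only [measureReal_def]
          nlinarith [hid]
        · have e1 : s ∩ A (k+1) = ∅ := by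
            rw [Set.eq_empty_iff_forall_notMem]
            intro x ⟨hx1, hx2⟩
            exact (Set.eq_empty_iff_forall_notMem.1 hdisj x) ⟨hx1, hAsub k hx2⟩
          rw [e1, hdisj]
          simp
      calc ∫ x in s, φ i x ∂μ
          = ∫ x in s, φ i x ∂μ + ∑ k ∈ Finset.Ico (min i N) (min j N),
            ∫ x in s, ((A (k+1)).indicator (fun _ => d + ds k) x
              - (A k).indicator (fun _ => ds k) x) ∂μ := by
            rw [Finset.sum_congr rfl hzero]
            simp
      _ = ∫ x in s, φ j x ∂μ := by
            rw [← integral_finset_sum _ (fun k _ => (hterm_int k).integrableOn),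
              ← integral_add ((hint i).integrableOn)
                (integrable_finset_sum _ (fun k _ => (hterm_int k).integrableOn))]
            exact (integral_congr_ae (Filter.EventuallyEq.of_eq (funext fun ω => (hsplit ω)))).symm
  ------------------------------------------------------------------ square function
  have hsq : ∀ ω, Real.sqrt (∑' n, (φ (n + 1) ω - φ n ω) ^ 2) ≤ 1 := by
    intro ω
    rw [Real.sqrt_le_one]
    have hdiff1 : ∀ n, n < N → φ (n+1) ω - φ n ω =
        (A (n+1)).indicator (fun _ => d + ds n) ω - (A n).indicator (fun _ => ds n) ω := by
      intro n hn
      simp only [hφdef]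
      rw [min_eq_left (by omega : n + 1 ≤ N), min_eq_left (by omega : n ≤ N),
        Finset.sum_range_succ]
      ring
    have hdiff2 : ∀ n, N ≤ n → φ (n+1) ω - φ n ω = 0 := by
      intro n hn
      simp only [hφdef]
      rw [min_eq_right (by omega : N ≤ n + 1), min_eq_right hn]
      ring
    have htsum : (∑' n, (φ (n + 1) ω - φ n ω) ^ 2)
        = ∑ n ∈ Finset.range N, (φ (n + 1) ω - φ n ω) ^ 2 := by
      refine tsum_eq_sum ?_
      intro n hn
      rw [hdiff2 n (Nat.not_lt.1 (fun h => hn (Finset.mem_range.2 h)))]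
      norm_num
    rw [htsum]
    have hvald : ∀ k, ω ∈ A (k+1) →
        (A (k+1)).indicator (fun _ => d + ds k) ω - (A k).indicator (fun _ => ds k) ω = d := by
      intro k hk
      rw [Set.indicator_of_mem hk, Set.indicator_of_mem (hAsub k hk)]
      ring
    have hvalds : ∀ k, ω ∈ A k → ω ∉ A (k+1) →
        (A (k+1)).indicator (fun _ => d + ds k) ω - (A k).indicator (fun _ => ds k) ω
          = -(ds k) := by
      intro k hk hk'
      rw [Set.indicator_of_notMem hk', Set.indicator_of_mem hk]
      ring
    have hval0 : ∀ k, ω ∉ A k →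
        (A (k+1)).indicator (fun _ => d + ds k) ω - (A k).indicator (fun _ => ds k) ω = 0 := by
      intro k hk
      rw [Set.indicator_of_notMem hk, Set.indicator_of_notMem (fun h => hk (hAsub k h))]
      ring
    by_cases hωN : ω ∈ A N
    · have hall : ∀ n ∈ Finset.range N, (φ (n + 1) ω - φ n ω) ^ 2 = d^2 := by
        intro n hn
        have hn' := Finset.mem_range.1 hn
        rw [hdiff1 n hn', hvald n (hAmono (n+1) N (by omega) hωN)]
      rw [Finset.sum_congr rfl hall, Finset.sum_const, Finset.card_range, nsmul_eq_mul]
      have : (N:ℝ) * d^2 = lam * d := by rw [← hNd]; ring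
      rw [this]
      nlinarith [hld, hδsq, sq_nonneg δ]
    · have hex : ∃ k, ω ∉ A (k+1) := ⟨N - 1, by rwa [Nat.sub_add_cancel hN1]⟩
      set M := Nat.find hex with hMdef
      have hMspec : ω ∉ A (M+1) := Nat.find_spec hex
      have hMmin : ∀ k, k < M → ω ∈ A (k+1) :=
        fun k hk => not_not.1 (Nat.find_min hex hk)
      have hMN : M < N := by
        have h1 : M ≤ N - 1 := Nat.find_min' hex
          (by rwa [Nat.sub_add_cancel hN1])
        omega
      have hωM : ω ∈ A M := by
        rcases Nat.eq_zero_or_pos M with h | h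
        · rw [h, hA0]; trivial
        · have := hMmin (M-1) (by omega)
          rwa [Nat.sub_add_cancel h] at this
      have hsum : ∑ n ∈ Finset.range N, (φ (n + 1) ω - φ n ω) ^ 2
          = (M:ℝ) * d^2 + (ds M)^2 := by
        rw [Finset.range_eq_Ico, ← Finset.sum_Ico_consecutive _ (Nat.zero_le (M+1))
          (by omega : M + 1 ≤ N)]
        have hfirst : ∑ n ∈ Finset.Ico 0 (M+1), (φ (n + 1) ω - φ n ω) ^ 2
            = (M:ℝ) * d^2 + (ds M)^2 := by
          rw [← Finset.range_eq_Ico, Finset.sum_range_succ]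
          have hM' : ∀ n ∈ Finset.range M, (φ (n + 1) ω - φ n ω) ^ 2 = d^2 := by
            intro n hn
            have hn' := Finset.mem_range.1 hn
            rw [hdiff1 n (by omega), hvald n (hMmin n hn')]
          rw [Finset.sum_congr rfl hM', Finset.sum_const, Finset.card_range, nsmul_eq_mul,
            hdiff1 M hMN, hvalds M hωM hMspec]
          ring
        have hsecond : ∑ n ∈ Finset.Ico (M+1) N, (φ (n + 1) ω - φ n ω) ^ 2 = 0 := by
          refine Finset.sum_eq_zero ?_
          intro n hn
          rw [Finset.mem_Ico] at hn
          have : ω ∉ A n := fun h => hMspec (hAmono (M+1) n (by omega) h)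
          rw [hdiff1 n hn.2, hval0 n this]
          norm_num
        rw [hfirst, hsecond, add_zero]
      rw [hsum]
      have h1 : (M:ℝ) * d^2 ≤ (N:ℝ) * d^2 := by
        have : (M:ℝ) ≤ N := by exact_mod_cast hMN.le
        nlinarith [sq_nonneg d]
      have h2 : (ds M)^2 ≤ δ^2 := by
        nlinarith [hds0 M, hdsle M]
      have h3 : (N:ℝ) * d^2 = lam * d := by rw [← hNd]; ring
      nlinarith [hld]
  ------------------------------------------------------------------ the tail bound
  have hφN : ∀ ω, ω ∈ A N → φ N ω = lam := by
    intro ω hω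
    simp only [hφdef]
    rw [min_self]
    have hall : ∀ k ∈ Finset.range N,
        (A (k+1)).indicator (fun _ => d + ds k) ω - (A k).indicator (fun _ => ds k) ω = d := by
      intro k hk
      have hk' := Finset.mem_range.1 hk
      rw [Set.indicator_of_mem (hAmono (k+1) N (by omega) hω),
        Set.indicator_of_mem (hAmono k N (by omega) hω)]
      ring
    rw [Finset.sum_congr rfl hall, Finset.sum_const, Finset.card_range, nsmul_eq_mul, hNd]
  have hsubset : A N ⊆ {ω | lam ≤ φ N ω - φ 0 ω} := by
    intro ω hω
    simp only [Set.mem_setOf_eq, hφ0, sub_zero, hφN ω hω, le_refl]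
  have hlbAN : ∀ k, ENNReal.ofReal (r^k) ≤ μ (A k) := by
    intro k
    induction k with
    | zero => simp [hA0]
    | succ k ih =>
      calc ENNReal.ofReal (r^(k+1)) = ENNReal.ofReal r * ENNReal.ofReal (r^k) := by
            rw [pow_succ, ENNReal.ofReal_mul (by positivity), mul_comm]
      _ ≤ ENNReal.ofReal r * μ (A k) := by gcongr
      _ ≤ μ (A (k+1)) := hAlb k
  have hqlb : Real.exp (-(d/δ)) ≤ q := by
    have h1 : (d + δ)/δ ≤ Real.exp (d/δ) := by
      have h0 := Real.add_one_le_exp (d/δ)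
      have h2 : (d + δ)/δ = d/δ + 1 := by field_simp
      linarith
    have h3 : 0 < (d + δ)/δ := by positivity
    rw [Real.exp_neg, hqdef]
    calc (Real.exp (d/δ))⁻¹ ≤ ((d + δ)/δ)⁻¹ := by
          apply inv_anti₀ h3 h1
    _ = δ/(d + δ) := by rw [inv_div]
  have hrlb : Real.exp (-(lam/δ) + -(lam*d)) ≤ r^N := by
    rw [hrdef, mul_pow]
    have e1 : Real.exp (-(d^2)) ^ N = Real.exp (-(lam * d)) := by
      rw [← Real.exp_nat_mul]
      congr 1
      rw [show (N:ℝ) * -(d^2) = -(((N:ℝ)*d)*d) by ring, hNd]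
    have e2 : Real.exp (-(lam/δ)) ≤ q^N := by
      have e3 : Real.exp (-(lam/δ)) = Real.exp (-(d/δ)) ^ N := by
        rw [← Real.exp_nat_mul]
        congr 1
        rw [show (N:ℝ) * -(d/δ) = -(((N:ℝ)*d)/δ) by ring, hNd]
      rw [e3]
      exact pow_le_pow_left₀ (Real.exp_pos _).le hqlb N
    rw [Real.exp_add, e1]
    exact mul_le_mul_of_nonneg_right e2 (Real.exp_pos _).le
  have hexplt : c₂ * Real.exp (-(c₁ * lam)) < Real.exp (-(lam/δ) + -(lam*d)) := by
    rw [← Real.exp_log hc₂, ← Real.exp_add]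
    rw [Real.exp_lt_exp]
    have h2γ : c₁ - 1/δ = 2*γ := by rw [hγdef]; ring
    have hcoef : γ ≤ c₁ - 1/δ - d := by linarith
    have hmul : lam * γ ≤ lam * (c₁ - 1/δ - d) := mul_le_mul_of_nonneg_left hcoef hlam0.le
    have hexpand : lam * (c₁ - 1/δ - d) = c₁*lam - lam/δ - lam*d := by ring
    linarith
  ------------------------------------------------------------------ conclusion
  refine ⟨lam, ℱ, φ, N, hlam0, ?_, hmart, hsimple, ae_of_all μ hsq, ?_⟩
  · show Fn 0 = ⊥
    refine le_antisymm ?_ bot_le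
    refine MeasurableSpace.generateFrom_le ?_
    rintro t ⟨k, hk, rfl⟩
    rw [Nat.le_zero.1 hk, hA0]
    exact MeasurableSet.univ
  · calc ENNReal.ofReal (c₂ * Real.exp (-(c₁ * lam))) < ENNReal.ofReal (r^N) := by
          rw [ENNReal.ofReal_lt_ofReal_iff (by positivity)]
          exact hexplt.trans_le hrlb
    _ ≤ μ (A N) := hlbAN N
    _ ≤ μ {ω | lam ≤ φ N ω - φ 0 ω} := measure_mono hsubset
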